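/- For the two-hop line network with symmetric erasures ε₁=ε₂=ε∈(0,1), the estimated capacity with buffer size m equals (1-ε)·(1 - ε·φ(m)) where the birth-death chain has α₀=1-ε, α=(1-ε)ε, β=ε(1-ε)=α; explicitly C(m) = (1-ε)·(1 - ε/(ε + m)) = (1-ε)·m/(m+ε), which converges to 1-ε as m→∞. -/

import Mathlib

open Finset

theorem stmt13 (ε : ℝ) (hε : ε ∈ Set.Ioo (0:ℝ) 1) (C : ℕ → ℝ)
    (hC : ∀ m, C m = (1-ε) * (1 - ε *
      (((1-ε) * ((1-ε)*ε)^(m-1) / (ε*(1-ε))^m) /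
        (1 + ((1-ε)/(ε*(1-ε))) * ∑ l ∈ range m, (((1-ε)*ε)/(ε*(1-ε)))^l)))) :
    (∀ m : ℕ, 1 ≤ m → C m = (1-ε) * m / (m+ε)) ∧
    Filter.Tendsto C Filter.atTop (nhds (1-ε)) := by
  obtain ⟨hε0, hε1⟩ := hε
  have hεne : ε ≠ 0 := ne_of_gt hε0
  have h1ε : (1:ℝ) - ε ≠ 0 := by linarith
  have key : ∀ m : ℕ, 1 ≤ m → C m = (1-ε) * m / (m+ε) := by
    intro m hm
    rw [hC]
    have hs : (((1-ε)*ε)/(ε*(1-ε))) = 1 := by field_simp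
    rw [hs]
    simp only [one_pow, sum_const, card_range, nsmul_eq_mul, mul_one]
    have hpowm : (ε*(1-ε))^m = (ε*(1-ε))^(m-1) * (ε*(1-ε)) := by
      rw [← pow_succ]; congr 1; omega
    have hnum : ((1-ε) * ((1-ε)*ε)^(m-1) / (ε*(1-ε))^m) = 1/ε := by
      rw [hpowm, mul_comm (1-ε) ε]
      have hp : (ε*(1-ε))^(m-1) ≠ 0 := pow_ne_zero _ (by positivity)
      field_simp
    rw [hnum]
    have hd : (1 + (1-ε)/(ε*(1-ε)) * m) = (ε + m)/ε := by
      field_simp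
    rw [hd]
    have hεm : (ε + (m:ℝ)) ≠ 0 := by
      have : (0:ℝ) ≤ m := Nat.cast_nonneg m
      positivity
    field_simp
    ring
  refine ⟨key, ?_⟩
  have hlim : Filter.Tendsto (fun m : ℕ => (1-ε) * m / (m+ε)) Filter.atTop (nhds (1-ε)) := by
    have h1 : Filter.Tendsto (fun m : ℕ => ((m:ℝ)+ε)) Filter.atTop Filter.atTop :=
      Filter.tendsto_atTop_add_const_right _ ε tendsto_natCast_atTop_atTop
    have h2 : Filter.Tendsto (fun m : ℕ => ((m:ℝ)+ε)⁻¹) Filter.atTop (nhds 0) :=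
      h1.inv_tendsto_atTop
    have h3 : Filter.Tendsto (fun m : ℕ => (1-ε) - (1-ε)*ε * ((m:ℝ)+ε)⁻¹)
        Filter.atTop (nhds ((1-ε) - (1-ε)*ε*0)) :=
      (tendsto_const_nhds).sub ((tendsto_const_nhds).mul h2)
    rw [mul_zero, sub_zero] at h3
    refine h3.congr' ?_
    filter_upwards [Filter.eventually_ge_atTop 1] with m hm
    have hεm : ((m:ℝ) + ε) ≠ 0 := by
      have : (0:ℝ) ≤ m := Nat.cast_nonneg m
      positivity
    field_simp
    ring
  refine hlim.congr' ?_
  filter_upwards [Filter.eventually_ge_atTop 1] with m hm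
  exact (key m hm).symm
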